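/- Let (X, μ) be a measure space, N a positive integer, and f_1, …, f_N : X → ℂ measurable functions forming an orthonormal family in L²(X, μ). Let K(x, y) := ∑_{j=1}^N f_j(x) · conj(f_j(y)) and let ν_N be the determinantal point process on X^N with density (1/N!) |det (f_j(x_i))_{i,j=1}^N|² with respect to μ^{⊗N}. Then for every bounded measurable g : X → ℝ, the variance of the linear statistic N[g](x_1, …, x_N) = ∑_{i=1}^N g(x_i) with respect to ν_N satisfies Var[N[g]] = (1/2) ∫_X ∫_X |K(x, y)|² · (g(x) − g(y))² dμ(x) dμ(y), i.e. ∫_{X^N} (∑_i g(x_i))² dν_N − (∫_{X^N} ∑_i g(x_i) dν_N)² equals the right-hand side. -/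

import Mathlib

open MeasureTheory Complex Set
open scoped ENNReal NNReal

namespace DetVarAux



noncomputable def cE {N : ℕ} (σ : Equiv.Perm (Fin N)) : ℂ := ((Equiv.Perm.sign σ : ℤ) : ℂ)

lemma cE_mul_self {N : ℕ} (σ : Equiv.Perm (Fin N)) : cE σ * cE σ = 1 := by
  unfold cE
  rw [← Int.cast_mul, ← Units.val_mul, Int.units_mul_self]
  simp

lemma conj_cE {N : ℕ} (σ : Equiv.Perm (Fin N)) : (starRingEnd ℂ) (cE σ) = cE σ :=
  map_intCast _ _

lemma agree_off_one {N : ℕ} (σ τ : Equiv.Perm (Fin N)) (i₀ : Fin N)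
    (h : ∀ i, i ≠ i₀ → τ i = σ i) : τ = σ := by
  have h0 : τ i₀ = σ i₀ := by
    have hk : σ⁻¹ (τ i₀) = i₀ := by
      by_contra hk
      have h1 : τ (σ⁻¹ (τ i₀)) = τ i₀ := by
        rw [h _ hk]; simp
      exact hk (τ.injective h1)
    have := congrArg σ hk
    simpa using this
  refine Equiv.ext fun i => ?_
  by_cases hi : i = i₀
  · rw [hi, h0]
  · exact h i hi

lemma agree_off_two {N : ℕ} (σ τ : Equiv.Perm (Fin N)) (i₀ i₁ : Fin N) (h01 : i₀ ≠ i₁)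
    (h : ∀ i, i ≠ i₀ → i ≠ i₁ → τ i = σ i) :
    τ = σ ∨ τ = σ * Equiv.swap i₀ i₁ := by
  have key : ∀ i, i = i₀ ∨ i = i₁ → σ⁻¹ (τ i) = i₀ ∨ σ⁻¹ (τ i) = i₁ := by
    intro i _
    by_contra hk
    push_neg at hk
    have h1 : τ (σ⁻¹ (τ i)) = τ i := by
      rw [h _ hk.1 hk.2]; simp
    have h2 := τ.injective h1
    rcases ‹i = i₀ ∨ i = i₁› with rfl | rfl
    · exact hk.1 h2
    · exact hk.2 h2
  have h0 := key i₀ (Or.inl rfl)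
  rcases h0 with h0 | h0
  · -- τ i₀ = σ i₀
    have hτ0 : τ i₀ = σ i₀ := by
      have := congrArg σ h0; simpa using this
    left
    refine agree_off_one σ τ i₁ fun i hi1 => ?_
    by_cases hi0 : i = i₀
    · rw [hi0, hτ0]
    · exact h i hi0 hi1
  · -- τ i₀ = σ i₁
    have hτ0 : τ i₀ = σ i₁ := by
      have := congrArg σ h0; simpa using this
    right
    have h1 := key i₁ (Or.inr rfl)
    have hτ1 : τ i₁ = σ i₀ := by
      rcases h1 with h1 | h1
      · have := congrArg σ h1; simpa using this
      · exfalso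
        have : τ i₁ = σ i₁ := by have := congrArg σ h1; simpa using this
        exact h01 (τ.injective (by rw [hτ0, this]))
    refine Equiv.ext fun i => ?_
    rcases eq_or_ne i i₀ with rfl | hi0
    · simpa [Equiv.swap_apply_left] using hτ0
    rcases eq_or_ne i i₁ with rfl | hi1
    · simpa [Equiv.swap_apply_right] using hτ1
    · simp only [Equiv.Perm.mul_apply, Equiv.swap_apply_of_ne_of_ne hi0 hi1]
      exact h i hi0 hi1

lemma sum_perm_one {N : ℕ} (M : Fin N → Fin N → Fin N → ℂ) (i₀ : Fin N)
    (hM : ∀ i, i ≠ i₀ → ∀ j j', M i j j' = if j = j' then 1 else 0)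
    (σ : Equiv.Perm (Fin N)) :
    ∑ τ : Equiv.Perm (Fin N), (cE σ * cE τ) * ∏ i, M i (σ i) (τ i)
      = M i₀ (σ i₀) (σ i₀) := by
  rw [Finset.sum_eq_single σ]
  · rw [cE_mul_self, one_mul]
    rw [Finset.prod_eq_single i₀ (fun i _ hi => by rw [hM i hi]; simp)
      (fun h => absurd (Finset.mem_univ _) h)]
  · intro τ _ hτ
    have hex : ∃ i, i ≠ i₀ ∧ τ i ≠ σ i := by
      by_contra hc
      push_neg at hc
      exact hτ (agree_off_one σ τ i₀ fun i hi => hc i hi)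
    obtain ⟨i, hi, hne⟩ := hex
    rw [Finset.prod_eq_zero (Finset.mem_univ i), mul_zero]
    rw [hM i hi, if_neg fun h => hne h.symm]
  · exact fun h => absurd (Finset.mem_univ σ) h

lemma sum_perm_two {N : ℕ} (M : Fin N → Fin N → Fin N → ℂ) (i₀ i₁ : Fin N) (h01 : i₀ ≠ i₁)
    (hM : ∀ i, i ≠ i₀ → i ≠ i₁ → ∀ j j', M i j j' = if j = j' then 1 else 0)
    (σ : Equiv.Perm (Fin N)) :
    ∑ τ : Equiv.Perm (Fin N), (cE σ * cE τ) * ∏ i, M i (σ i) (τ i)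
      = M i₀ (σ i₀) (σ i₀) * M i₁ (σ i₁) (σ i₁)
        - M i₀ (σ i₀) (σ i₁) * M i₁ (σ i₁) (σ i₀) := by
  classical
  set τ' : Equiv.Perm (Fin N) := σ * Equiv.swap i₀ i₁ with hτ'
  have hστ' : σ ≠ τ' := by
    intro h
    have : σ i₀ = τ' i₀ := by rw [h]
    rw [hτ'] at this
    simp only [Equiv.Perm.mul_apply, Equiv.swap_apply_left] at this
    exact h01 (σ.injective this)
  have hvanish : ∀ τ : Equiv.Perm (Fin N), τ ∉ ({σ, τ'} : Finset (Equiv.Perm (Fin N))) →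
      (cE σ * cE τ) * ∏ i, M i (σ i) (τ i) = 0 := by
    intro τ hτ
    simp only [Finset.mem_insert, Finset.mem_singleton] at hτ
    push_neg at hτ
    have hex : ∃ i, i ≠ i₀ ∧ i ≠ i₁ ∧ τ i ≠ σ i := by
      by_contra hc
      push_neg at hc
      rcases agree_off_two σ τ i₀ i₁ h01 (fun i h1 h2 => hc i h1 h2) with h | h
      · exact hτ.1 h
      · exact hτ.2 h
    obtain ⟨i, hi0, hi1, hne⟩ := hex
    rw [Finset.prod_eq_zero (Finset.mem_univ i), mul_zero]
    rw [hM i hi0 hi1, if_neg fun h => hne h.symm]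
  have hsub : ∑ τ : Equiv.Perm (Fin N), (cE σ * cE τ) * ∏ i, M i (σ i) (τ i)
      = ∑ τ ∈ ({σ, τ'} : Finset (Equiv.Perm (Fin N))), (cE σ * cE τ) * ∏ i, M i (σ i) (τ i) :=
    (Finset.sum_subset (Finset.subset_univ _) fun τ _ hτ => hvanish τ hτ).symm
  rw [hsub, Finset.sum_pair hστ']
  have hprod1 : ∏ i, M i (σ i) (σ i) = M i₀ (σ i₀) (σ i₀) * M i₁ (σ i₁) (σ i₁) := by
    rw [← Finset.prod_subset (Finset.subset_univ ({i₀, i₁} : Finset (Fin N)))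
      (fun i _ hi => ?_), Finset.prod_pair h01]
    have hi0 : i ≠ i₀ := fun h => hi (by simp [h])
    have hi1 : i ≠ i₁ := fun h => hi (by simp [h])
    rw [hM i hi0 hi1]; simp
  have hprod2 : ∏ i, M i (σ i) (τ' i) = M i₀ (σ i₀) (σ i₁) * M i₁ (σ i₁) (σ i₀) := by
    have e0 : τ' i₀ = σ i₁ := by rw [hτ']; simp [Equiv.swap_apply_left]
    have e1 : τ' i₁ = σ i₀ := by rw [hτ']; simp [Equiv.swap_apply_right]
    rw [← Finset.prod_subset (Finset.subset_univ ({i₀, i₁} : Finset (Fin N)))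
      (fun i _ hi => ?_), Finset.prod_pair h01, e0, e1]
    have hi0 : i ≠ i₀ := fun h => hi (by simp [h])
    have hi1 : i ≠ i₁ := fun h => hi (by simp [h])
    have : τ' i = σ i := by
      rw [hτ']; simp [Equiv.Perm.mul_apply, Equiv.swap_apply_of_ne_of_ne hi0 hi1]
    rw [this, hM i hi0 hi1]; simp
  have hsign : cE σ * cE τ' = -1 := by
    rw [hτ']
    unfold cE
    rw [Equiv.Perm.sign_mul, Equiv.Perm.sign_swap h01]
    push_cast
    rcases Int.units_eq_one_or (Equiv.Perm.sign σ) with h | h <;> rw [h] <;> norm_num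
  rw [cE_mul_self, one_mul, hprod1, hsign, hprod2]
  ring




variable {X : Type*} [MeasurableSpace X]

lemma integral_pi_prod (μ : Measure X) [SigmaFinite μ] {N : ℕ} (h : Fin N → X → ℂ) :
    ∫ x : Fin N → X, ∏ i, h i (x i) ∂(Measure.pi fun _ : Fin N => μ)
      = ∏ i, ∫ y, h i y ∂μ := by
  letI : MeasureSpace X := ⟨μ⟩
  exact MeasureTheory.integral_fintype_prod_eq_prod (𝕜 := ℂ) h

lemma integrable_pi_prod (μ : Measure X) [SigmaFinite μ] {N : ℕ} (h : Fin N → X → ℂ)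
    (hint : ∀ i, Integrable (h i) μ) :
    Integrable (fun x : Fin N → X => ∏ i, h i (x i)) (Measure.pi fun _ : Fin N => μ) := by
  letI : MeasureSpace X := ⟨μ⟩
  exact MeasureTheory.Integrable.fintype_prod (f := h) hint

lemma integrable_mul_conj (μ : Measure X) (a b : X → ℂ)
    (hb : Measurable b) (hL2a : MemLp a 2 μ) (hL2b : MemLp b 2 μ) :
    Integrable (fun y => a y * (starRingEnd ℂ) (b y)) μ := by
  have hbc : MemLp (fun y => (starRingEnd ℂ) (b y)) 2 μ := by
    refine ⟨(Complex.continuous_conj.measurable.comp hb).aestronglyMeasurable, ?_⟩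
    exact lt_of_eq_of_lt (eLpNorm_conj b 2 μ) hL2b.2
  have h := hbc.smul hL2a (p := 2) (q := 2) (r := 1)
  have h2 : Integrable ((a : X → ℂ) • fun y => (starRingEnd ℂ) (b y)) μ := memLp_one_iff_integrable.mp h
  exact h2

lemma pi_restrict_eq (μ : Measure X) {S : Set X} (hS : MeasurableSet S) {N : ℕ} (hN : 0 < N) :
    (Measure.pi fun _ : Fin N => μ).restrict (Set.pi Set.univ fun _ => S)
      = (Measure.pi fun _ : Fin N => μ.restrict S).restrict (Set.pi Set.univ fun _ => S) := by
  classical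
  haveI : Nonempty (Fin N) := ⟨⟨0, hN⟩⟩
  set T : Set (Fin N → X) := Set.pi Set.univ fun _ => S with hTdef
  have hT : MeasurableSet T := MeasurableSet.pi Set.countable_univ fun _ _ => hS
  have hres : ∀ E : Set X, (μ.restrict S).toOuterMeasure E = μ (E ∩ S) := by
    intro E
    rw [Measure.toOuterMeasure_apply, Measure.restrict_apply' hS]
  ext A hA
  rw [Measure.restrict_apply hA, Measure.restrict_apply hA]
  have hB : MeasurableSet (A ∩ T) := hA.inter hT
  have hBT : A ∩ T ⊆ T := inter_subset_right
  rw [Measure.pi_def, Measure.pi_def, toMeasure_apply _ _ hB, toMeasure_apply _ _ hB]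
  apply le_antisymm
  · -- pi μ (A∩T) ≤ pi (μ.restrict S) (A∩T)
    have hR : (OuterMeasure.pi fun _ : Fin N => (μ.restrict S).toOuterMeasure) (A ∩ T)
        = ⨅ (t : ℕ → Set (Fin N → X)) (_ : A ∩ T ⊆ ⋃ n, t n),
            ∑' n, ⨆ _ : (t n).Nonempty,
              piPremeasure (fun _ : Fin N => (μ.restrict S).toOuterMeasure) (t n) := by
      rw [OuterMeasure.pi, OuterMeasure.boundedBy_apply]
    rw [hR]
    refine le_iInf₂ fun t ht => ?_
    calc (OuterMeasure.pi fun _ : Fin N => μ.toOuterMeasure) (A ∩ T)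
        ≤ (OuterMeasure.pi fun _ : Fin N => μ.toOuterMeasure) (⋃ n, t n ∩ T) := by
          apply measure_mono
          intro x hx
          obtain ⟨s, ⟨n, rfl⟩, hxs⟩ := ht hx
          exact mem_iUnion.2 ⟨n, hxs, hBT hx⟩
      _ ≤ ∑' n, (OuterMeasure.pi fun _ : Fin N => μ.toOuterMeasure) (t n ∩ T) :=
          measure_iUnion_le _
      _ ≤ ∑' n, ⨆ _ : (t n).Nonempty,
            piPremeasure (fun _ : Fin N => (μ.restrict S).toOuterMeasure) (t n) := by
          refine ENNReal.tsum_le_tsum fun n => ?_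
          rcases (t n ∩ T).eq_empty_or_nonempty with hemp | hne
          · rw [hemp]
            simp [piPremeasure, Finset.prod_eq_zero (Finset.mem_univ (Classical.arbitrary (Fin N)))]
          · have htn : (t n).Nonempty := hne.mono inter_subset_left
            rw [iSup_pos htn]
            refine le_trans (OuterMeasure.boundedBy_le _) ?_
            refine Finset.prod_le_prod' fun i _ => ?_
            rw [hres, Measure.toOuterMeasure_apply]
            apply measure_mono
            rintro _ ⟨x, ⟨hx1, hx2⟩, rfl⟩
            exact ⟨⟨x, hx1, rfl⟩, hx2 i (mem_univ i)⟩
  · -- pi (μ.restrict S) ≤ pi μ globally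
    refine le_trans ?_ le_rfl
    have hmono : (OuterMeasure.pi fun _ : Fin N => (μ.restrict S).toOuterMeasure)
        ≤ (OuterMeasure.pi fun _ : Fin N => μ.toOuterMeasure) := by
      rw [OuterMeasure.le_pi]
      intro s _
      refine le_trans (OuterMeasure.pi_pi_le _ s) ?_
      refine Finset.prod_le_prod' fun i _ => ?_
      rw [hres, Measure.toOuterMeasure_apply]
      exact measure_mono inter_subset_left
    exact hmono _




lemma point_expand {N : ℕ} (f : Fin N → X → ℂ) (u : Fin N → X → ℂ) (x : Fin N → X) :
    (∏ k, u k (x k)) *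
      ((∑ σ : Equiv.Perm (Fin N), cE σ * ∏ i, f (σ i) (x i)) *
       (starRingEnd ℂ) (∑ σ : Equiv.Perm (Fin N), cE σ * ∏ i, f (σ i) (x i)))
  = ∑ σ : Equiv.Perm (Fin N), ∑ τ : Equiv.Perm (Fin N), (cE σ * cE τ) *
      ∏ k, (u k (x k) * (f (σ k) (x k) * (starRingEnd ℂ) (f (τ k) (x k)))) := by
  rw [map_sum, Finset.sum_mul_sum, Finset.mul_sum]
  refine Finset.sum_congr rfl fun σ _ => ?_
  rw [Finset.mul_sum]
  refine Finset.sum_congr rfl fun τ _ => ?_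
  rw [map_mul, conj_cE, map_prod]
  simp only [Finset.prod_mul_distrib]
  ring

lemma key_term_integrable (μ : Measure X) [SigmaFinite μ] {N : ℕ} (f : Fin N → X → ℂ)
    (hmeas : ∀ j, Measurable (f j)) (hL2 : ∀ j, MemLp (f j) 2 μ)
    (u : Fin N → X → ℂ) (hu : ∀ k, Measurable (u k)) (c : ℝ) (hc : ∀ k y, ‖u k y‖ ≤ c)
    (σ τ : Equiv.Perm (Fin N)) :
    Integrable (fun x : Fin N → X =>
        ∏ k, (u k (x k) * (f (σ k) (x k) * (starRingEnd ℂ) (f (τ k) (x k)))))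
      (Measure.pi fun _ : Fin N => μ) := by
  refine integrable_pi_prod μ (fun k y => u k y * (f (σ k) y * (starRingEnd ℂ) (f (τ k) y))) fun k => ?_
  exact Integrable.bdd_mul
    (integrable_mul_conj μ (f (σ k)) (f (τ k)) (hmeas (τ k)) (hL2 (σ k)) (hL2 (τ k)))
    (hu k).aestronglyMeasurable (ae_of_all _ (hc k))

lemma key_expand (μ : Measure X) [SigmaFinite μ] {N : ℕ} (f : Fin N → X → ℂ)
    (hmeas : ∀ j, Measurable (f j)) (hL2 : ∀ j, MemLp (f j) 2 μ)
    (u : Fin N → X → ℂ) (hu : ∀ k, Measurable (u k)) (c : ℝ) (hc : ∀ k y, ‖u k y‖ ≤ c) :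
    (∫ x : Fin N → X, (∏ k, u k (x k)) *
        ((∑ σ : Equiv.Perm (Fin N), cE σ * ∏ i, f (σ i) (x i)) *
         (starRingEnd ℂ) (∑ σ : Equiv.Perm (Fin N), cE σ * ∏ i, f (σ i) (x i)))
      ∂(Measure.pi fun _ : Fin N => μ))
    = ∑ σ : Equiv.Perm (Fin N), ∑ τ : Equiv.Perm (Fin N), (cE σ * cE τ) *
        ∏ k, ∫ y, u k y * (f (σ k) y * (starRingEnd ℂ) (f (τ k) y)) ∂μ := by
  simp only [point_expand f u]
  rw [integral_finset_sum _ fun σ _ => integrable_finset_sum _ fun τ _ =>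
    (key_term_integrable μ f hmeas hL2 u hu c hc σ τ).const_mul _]
  refine Finset.sum_congr rfl fun σ _ => ?_
  rw [integral_finset_sum _ fun τ _ =>
    (key_term_integrable μ f hmeas hL2 u hu c hc σ τ).const_mul _]
  refine Finset.sum_congr rfl fun τ _ => ?_
  rw [integral_const_mul,
    integral_pi_prod μ (fun k y => u k y * (f (σ k) y * (starRingEnd ℂ) (f (τ k) y)))]

lemma key_integrable (μ : Measure X) [SigmaFinite μ] {N : ℕ} (f : Fin N → X → ℂ)
    (hmeas : ∀ j, Measurable (f j)) (hL2 : ∀ j, MemLp (f j) 2 μ)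
    (u : Fin N → X → ℂ) (hu : ∀ k, Measurable (u k)) (c : ℝ) (hc : ∀ k y, ‖u k y‖ ≤ c) :
    Integrable (fun x : Fin N → X => (∏ k, u k (x k)) *
        ((∑ σ : Equiv.Perm (Fin N), cE σ * ∏ i, f (σ i) (x i)) *
         (starRingEnd ℂ) (∑ σ : Equiv.Perm (Fin N), cE σ * ∏ i, f (σ i) (x i))))
      (Measure.pi fun _ : Fin N => μ) := by
  have h : Integrable (fun x : Fin N → X =>
      ∑ σ : Equiv.Perm (Fin N), ∑ τ : Equiv.Perm (Fin N), (cE σ * cE τ) *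
        ∏ k, (u k (x k) * (f (σ k) (x k) * (starRingEnd ℂ) (f (τ k) (x k)))))
      (Measure.pi fun _ : Fin N => μ) :=
    integrable_finset_sum _ fun σ _ => integrable_finset_sum _ fun τ _ =>
      (key_term_integrable μ f hmeas hL2 u hu c hc σ τ).const_mul _
  exact h.congr (Filter.Eventually.of_forall fun x => (point_expand f u x).symm)


noncomputable def dD {X : Type*} {N : ℕ} (f : Fin N → X → ℂ) : (Fin N → X) → ℂ :=
  fun x => ∑ σ : Equiv.Perm (Fin N), cE σ * ∏ i, f (σ i) (x i)

lemma det_eq_dD {X : Type*} {N : ℕ} (f : Fin N → X → ℂ) (x : Fin N → X) :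
    (Matrix.of fun i j : Fin N => f j (x i)).det = dD f x := by
  rw [← Matrix.det_transpose, Matrix.det_apply']
  refine Finset.sum_congr rfl fun σ _ => ?_
  rw [cE]
  norm_num [Matrix.transpose_apply, Matrix.of_apply]

lemma dD_apply {X : Type*} {N : ℕ} (f : Fin N → X → ℂ) (x : Fin N → X) :
    dD f x = ∑ σ : Equiv.Perm (Fin N), cE σ * ∏ i, f (σ i) (x i) := rfl

lemma dD_measurable {X : Type*} [MeasurableSpace X] {N : ℕ} (f : Fin N → X → ℂ)
    (hmeas : ∀ j, Measurable (f j)) : Measurable (dD f) := by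
  unfold dD
  refine Finset.measurable_sum _ fun σ _ => ?_
  exact (Finset.measurable_prod _ fun i _ =>
    (hmeas (σ i)).comp (measurable_pi_apply i)).const_mul _



theorem core {X : Type*} [MeasurableSpace X]
    (μ : Measure X) [SigmaFinite μ] (N : ℕ) (f : Fin N → X → ℂ)
    (hmeas : ∀ j, Measurable (f j))
    (hL2 : ∀ j, MemLp (f j) 2 μ)
    (horth : ∀ i j, (∫ x, f i x * (starRingEnd ℂ) (f j x) ∂μ) =
      if i = j then 1 else 0)
    (K : X → X → ℂ)
    (hK : ∀ x y, K x y = ∑ j, f j x * (starRingEnd ℂ) (f j y))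
    (ν : Measure (Fin N → X))
    (hν : ν = (Measure.pi fun _ : Fin N => μ).withDensity fun x =>
      ENNReal.ofReal ((Nat.factorial N : ℝ)⁻¹ *
        ‖(Matrix.of fun i j : Fin N => f j (x i)).det‖ ^ 2))
    (g : X → ℝ) (hg : Measurable g) (C : ℝ) (hgC : ∀ x, |g x| ≤ C) :
    (∫ x : Fin N → X, (∑ i, g (x i)) ^ 2 ∂ν) -
        (∫ x : Fin N → X, (∑ i, g (x i)) ∂ν) ^ 2 =
      (1 / 2) * ∫ x, ∫ y, ‖K x y‖ ^ 2 * (g x - g y) ^ 2 ∂μ ∂μ := by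
  classical
  -- abbreviations
  set Cm : ℝ := max C 1 with hCm
  have hgCm : ∀ y, ‖((g y : ℝ) : ℂ)‖ ≤ Cm := fun y => by
    rw [Complex.norm_real]
    exact le_trans (hgC y) (le_max_left _ _)
  have h1Cm : (1 : ℝ) ≤ Cm := le_max_right _ _
  -- the G-integrals
  set G : Fin N → Fin N → ℂ :=
    fun j j' => ∫ y, ((g y : ℝ) : ℂ) * (f j y * (starRingEnd ℂ) (f j' y)) ∂μ with hG
  set G2 : Fin N → Fin N → ℂ :=
    fun j j' => ∫ y, (((g y : ℝ) : ℂ) * ((g y : ℝ) : ℂ)) *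
      (f j y * (starRingEnd ℂ) (f j' y)) ∂μ with hG2
  -- conversion of ν-integrals
  have hconv : ∀ F : (Fin N → X) → ℝ, ∫ x, F x ∂ν =
      ∫ x, ((N.factorial : ℝ)⁻¹ * ‖dD f x‖ ^ 2) * F x
        ∂(Measure.pi fun _ : Fin N => μ) := by
    intro F
    have habs : (fun x : Fin N → X => (N.factorial : ℝ)⁻¹ * ‖dD f x‖ ^ 2)
        = fun x => (N.factorial : ℝ)⁻¹ * ‖dD f x‖ ^ 2 := by
      funext x; rfl
    have hρmeas : Measurable fun x : Fin N → X =>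
        ((N.factorial : ℝ)⁻¹ * ‖dD f x‖ ^ 2).toNNReal := by
      apply Measurable.real_toNNReal
      have : Measurable fun x : Fin N → X => (N.factorial : ℝ)⁻¹ * ‖dD f x‖ ^ 2 :=
        (((dD_measurable f hmeas).norm).pow_const 2).const_mul _
      rw [habs]; exact this
    have hν' : ν = (Measure.pi fun _ : Fin N => μ).withDensity fun x =>
        (((N.factorial : ℝ)⁻¹ * ‖dD f x‖ ^ 2).toNNReal : ℝ≥0∞) := by
      rw [hν]
      congr 1
      funext x
      rw [det_eq_dD f x, ENNReal.ofReal]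
    rw [hν', integral_withDensity_eq_integral_smul hρmeas F]
    congr 1
    funext x
    rw [NNReal.smul_def, Real.coe_toNNReal _ (by positivity), smul_eq_mul]
  -- first moment
  have hfact : ((N.factorial : ℂ)) ≠ 0 := Nat.cast_ne_zero.2 (Nat.factorial_ne_zero N)
  have hE1 : ((∫ x : Fin N → X, (∑ i, g (x i)) ∂ν : ℝ) : ℂ) = ∑ j, G j j := by
    set v : Fin N → Fin N → X → ℂ :=
      fun i k y => if k = i then ((g y : ℝ) : ℂ) else 1 with hv
    have hvmeas : ∀ i k, Measurable (v i k) := by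
      intro i k
      by_cases hki : k = i
      · simpa [hv, hki, Function.comp_def] using Complex.measurable_ofReal.comp hg
      · simp [hv, hki]
    have hvbd : ∀ i k y, ‖v i k y‖ ≤ Cm := by
      intro i k y
      by_cases hki : k = i
      · simpa [hv, hki] using hgCm y
      · simpa [hv, hki] using h1Cm
    have hpt : ∀ x : Fin N → X,
        ((((N.factorial : ℝ)⁻¹ * ‖dD f x‖ ^ 2) * (∑ i, g (x i)) : ℝ) : ℂ)
        = (N.factorial : ℂ)⁻¹ * ∑ i, ((∏ k, v i k (x k)) *
            (dD f x * (starRingEnd ℂ) (dD f x))) := by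
      intro x
      have h2 : ∀ i, (∏ k, v i k (x k)) = ((g (x i) : ℝ) : ℂ) := by
        intro i
        simp only [hv]
        rw [Finset.prod_ite_eq' Finset.univ i (fun k => ((g (x k) : ℝ) : ℂ))]
        simp
      simp only [h2]
      rw [← Finset.sum_mul, Complex.mul_conj, ← Complex.sq_norm]
      push_cast
      ring
    have hval : ∀ i : Fin N, ∫ x : Fin N → X, (∏ k, v i k (x k)) *
          (dD f x * (starRingEnd ℂ) (dD f x)) ∂(Measure.pi fun _ : Fin N => μ)
        = ∑ σ : Equiv.Perm (Fin N), G (σ i) (σ i) := by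
      intro i
      simp only [dD_apply]
      rw [key_expand μ f hmeas hL2 (v i) (hvmeas i) Cm (hvbd i)]
      refine Finset.sum_congr rfl fun σ _ =>
        (sum_perm_one
          (fun k j j' => ∫ y, v i k y * (f j y * (starRingEnd ℂ) (f j' y)) ∂μ) i
          (fun k hk j j' => ?_) σ).trans ?_
      · simp only [hv, if_neg hk, one_mul]
        exact horth j j'
      · simp only [hv, hG, if_pos rfl]
    rw [hconv]
    refine Eq.trans (integral_ofReal (𝕜 := ℂ)
      (f := fun x : Fin N → X =>
        (N.factorial : ℝ)⁻¹ * ‖dD f x‖ ^ 2 * ∑ i, g (x i))).symm ?_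
    refine (integral_congr_ae (Filter.Eventually.of_forall fun x => hpt x)).trans ?_
    rw [integral_const_mul, integral_finset_sum _ (fun i _ => by
      simpa only [dD_apply] using
        key_integrable μ f hmeas hL2 (v i) (hvmeas i) Cm (hvbd i))]
    rw [Finset.sum_congr rfl fun i _ => hval i]
    have hswap : ∑ i : Fin N, ∑ σ : Equiv.Perm (Fin N), G (σ i) (σ i)
        = (N.factorial : ℂ) * ∑ j, G j j := by
      rw [Finset.sum_comm]
      calc ∑ σ : Equiv.Perm (Fin N), ∑ i, G (σ i) (σ i)
          = ∑ _σ : Equiv.Perm (Fin N), ∑ j, G j j :=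
            Finset.sum_congr rfl fun σ _ => Equiv.sum_comp σ fun j => G j j
        _ = (N.factorial : ℂ) * ∑ j, G j j := by
            rw [Finset.sum_const, Finset.card_univ, Fintype.card_perm, Fintype.card_fin,
              nsmul_eq_mul]
    rw [hswap, ← mul_assoc, inv_mul_cancel₀ hfact, one_mul]
  have hsplit : ∀ F : Fin N × Fin N → ℂ,
      ∑ p ∈ Finset.univ ×ˢ Finset.univ, F p
        = ∑ j, F (j, j) + ∑ p ∈ Finset.univ.offDiag, F p := by
    intro F
    rw [← Finset.diag_union_offDiag, Finset.sum_union (Finset.disjoint_diag_offDiag _),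
      Finset.sum_diag]
  have hswapgen : ∀ H : Fin N → Fin N → ℂ,
      ∑ i : Fin N, ∑ σ : Equiv.Perm (Fin N), H (σ i) (σ i)
        = (N.factorial : ℂ) * ∑ j, H j j := by
    intro H
    rw [Finset.sum_comm]
    calc ∑ σ : Equiv.Perm (Fin N), ∑ i, H (σ i) (σ i)
        = ∑ _σ : Equiv.Perm (Fin N), ∑ j, H j j :=
          Finset.sum_congr rfl fun σ _ => Equiv.sum_comp σ fun j => H j j
      _ = (N.factorial : ℂ) * ∑ j, H j j := by
          rw [Finset.sum_const, Finset.card_univ, Fintype.card_perm, Fintype.card_fin,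
            nsmul_eq_mul]
  have hoffswap : ∀ F : Fin N → Fin N → ℂ,
      ∑ p ∈ Finset.univ.offDiag, ∑ σ : Equiv.Perm (Fin N), F (σ p.1) (σ p.2)
        = (N.factorial : ℂ) * ∑ p ∈ Finset.univ.offDiag, F p.1 p.2 := by
    intro F
    rw [Finset.sum_comm]
    have hre : ∀ σ : Equiv.Perm (Fin N),
        ∑ p ∈ Finset.univ.offDiag, F (σ p.1) (σ p.2)
          = ∑ p ∈ Finset.univ.offDiag, F p.1 p.2 := by
      intro σ
      refine Finset.sum_nbij' (fun p => (σ p.1, σ p.2)) (fun q => (σ⁻¹ q.1, σ⁻¹ q.2))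
        ?_ ?_ ?_ ?_ ?_
      · intro p hp
        rw [Finset.mem_offDiag] at hp ⊢
        exact ⟨Finset.mem_univ _, Finset.mem_univ _, fun h => hp.2.2 (σ.injective h)⟩
      · intro q hq
        rw [Finset.mem_offDiag] at hq ⊢
        exact ⟨Finset.mem_univ _, Finset.mem_univ _, fun h => hq.2.2 (σ⁻¹.injective h)⟩
      · intro p _; simp
      · intro q _; simp
      · intro p _; rfl
    calc ∑ σ : Equiv.Perm (Fin N), ∑ p ∈ Finset.univ.offDiag, F (σ p.1) (σ p.2)
        = ∑ _σ : Equiv.Perm (Fin N), ∑ p ∈ Finset.univ.offDiag, F p.1 p.2 :=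
          Finset.sum_congr rfl fun σ _ => hre σ
      _ = (N.factorial : ℂ) * ∑ p ∈ Finset.univ.offDiag, F p.1 p.2 := by
          rw [Finset.sum_const, Finset.card_univ, Fintype.card_perm, Fintype.card_fin,
            nsmul_eq_mul]
  -- second moment
  have hE2 : ((∫ x : Fin N → X, (∑ i, g (x i)) ^ 2 ∂ν : ℝ) : ℂ)
      = ∑ j, G2 j j + ∑ q ∈ Finset.univ.offDiag,
          (G q.1 q.1 * G q.2 q.2 - G q.1 q.2 * G q.2 q.1) := by
    set w : Fin N × Fin N → Fin N → X → ℂ :=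
      fun p k y => (if k = p.1 then ((g y : ℝ) : ℂ) else 1) *
        (if k = p.2 then ((g y : ℝ) : ℂ) else 1) with hw
    have hwmeas : ∀ p k, Measurable (w p k) := by
      intro p k
      simp only [hw]
      refine Measurable.mul ?_ ?_
      · by_cases h : k = p.1
        · simpa [h, Function.comp_def] using Complex.measurable_ofReal.comp hg
        · simp [h]
      · by_cases h : k = p.2
        · simpa [h, Function.comp_def] using Complex.measurable_ofReal.comp hg
        · simp [h]
    have hwbd : ∀ p k y, ‖w p k y‖ ≤ Cm * Cm := by
      intro p k y
      have hb : ∀ (b : Prop) (inst : Decidable b), ‖if b then ((g y : ℝ) : ℂ) else 1‖ ≤ Cm := by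
        intro b inst
        by_cases hbb : b
        · rw [if_pos hbb]; exact hgCm y
        · rw [if_neg hbb]; simpa using h1Cm
      calc ‖w p k y‖ = ‖(if k = p.1 then ((g y : ℝ) : ℂ) else 1)‖ *
            ‖(if k = p.2 then ((g y : ℝ) : ℂ) else 1)‖ := by
            rw [hw]; exact norm_mul _ _
        _ ≤ Cm * Cm := mul_le_mul (hb _ _) (hb _ _) (norm_nonneg _)
            (le_trans zero_le_one h1Cm)
    have hpt : ∀ x : Fin N → X,
        ((((N.factorial : ℝ)⁻¹ * ‖dD f x‖ ^ 2) * (∑ i, g (x i)) ^ 2 : ℝ) : ℂ)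
        = (N.factorial : ℂ)⁻¹ * ∑ p ∈ Finset.univ ×ˢ Finset.univ,
            ((∏ k, w p k (x k)) * (dD f x * (starRingEnd ℂ) (dD f x))) := by
      intro x
      have h2 : ∀ p : Fin N × Fin N, (∏ k, w p k (x k))
          = ((g (x p.1) : ℝ) : ℂ) * ((g (x p.2) : ℝ) : ℂ) := by
        intro p
        simp only [hw]
        rw [Finset.prod_mul_distrib,
          Finset.prod_ite_eq' Finset.univ p.1 (fun k => ((g (x k) : ℝ) : ℂ)),
          Finset.prod_ite_eq' Finset.univ p.2 (fun k => ((g (x k) : ℝ) : ℂ))]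
        simp
      have h3 : ∑ p ∈ Finset.univ ×ˢ Finset.univ,
          (((g (x p.1) : ℝ) : ℂ) * ((g (x p.2) : ℝ) : ℂ))
          = (∑ i, ((g (x i) : ℝ) : ℂ)) ^ 2 := by
        rw [sq, Finset.sum_mul_sum, ← Finset.sum_product']
      simp only [h2]
      rw [← Finset.sum_mul, h3, Complex.mul_conj, ← Complex.sq_norm]
      push_cast
      ring
    have hdiag : ∀ i : Fin N, ∫ x : Fin N → X, (∏ k, w (i, i) k (x k)) *
          (dD f x * (starRingEnd ℂ) (dD f x)) ∂(Measure.pi fun _ : Fin N => μ)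
        = ∑ σ : Equiv.Perm (Fin N), G2 (σ i) (σ i) := by
      intro i
      simp only [dD_apply]
      rw [key_expand μ f hmeas hL2 (w (i, i)) (hwmeas (i, i)) (Cm * Cm) (hwbd (i, i))]
      refine Finset.sum_congr rfl fun σ _ =>
        (sum_perm_one
          (fun k j j' => ∫ y, w (i, i) k y * (f j y * (starRingEnd ℂ) (f j' y)) ∂μ) i
          (fun k hk j j' => ?_) σ).trans ?_
      · simp only [hw, if_neg hk, one_mul]
        exact horth j j'
      · simp only [hw, hG2, eq_self_iff_true, if_true]
    have hoff : ∀ p : Fin N × Fin N, p.1 ≠ p.2 →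
        ∫ x : Fin N → X, (∏ k, w p k (x k)) *
          (dD f x * (starRingEnd ℂ) (dD f x)) ∂(Measure.pi fun _ : Fin N => μ)
        = ∑ σ : Equiv.Perm (Fin N),
            (G (σ p.1) (σ p.1) * G (σ p.2) (σ p.2) - G (σ p.1) (σ p.2) * G (σ p.2) (σ p.1)) := by
      intro p hp
      simp only [dD_apply]
      rw [key_expand μ f hmeas hL2 (w p) (hwmeas p) (Cm * Cm) (hwbd p)]
      refine Finset.sum_congr rfl fun σ _ =>
        (sum_perm_two
          (fun k j j' => ∫ y, w p k y * (f j y * (starRingEnd ℂ) (f j' y)) ∂μ) p.1 p.2 hp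
          (fun k hk1 hk2 j j' => ?_) σ).trans ?_
      · simp only [hw, if_neg hk1, if_neg hk2, one_mul]
        exact horth j j'
      · have e1 : ∀ j j', (∫ y, w p p.1 y * (f j y * (starRingEnd ℂ) (f j' y)) ∂μ)
            = G j j' := by
          intro j j'
          simp only [hw, hG, eq_self_iff_true, if_true, if_neg hp, mul_one]
        have e2 : ∀ j j', (∫ y, w p p.2 y * (f j y * (starRingEnd ℂ) (f j' y)) ∂μ)
            = G j j' := by
          intro j j'
          simp only [hw, hG, eq_self_iff_true, if_true, if_neg (Ne.symm hp), one_mul]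
        simp only [e1, e2]
    rw [hconv]
    refine Eq.trans (integral_ofReal (𝕜 := ℂ)
      (f := fun x : Fin N → X =>
        (N.factorial : ℝ)⁻¹ * ‖dD f x‖ ^ 2 * (∑ i, g (x i)) ^ 2)).symm ?_
    refine (integral_congr_ae (Filter.Eventually.of_forall fun x => hpt x)).trans ?_
    rw [integral_const_mul, integral_finset_sum _ (fun p _ => by
      simpa only [dD_apply] using
        key_integrable μ f hmeas hL2 (w p) (hwmeas p) (Cm * Cm) (hwbd p))]
    rw [hsplit fun p => ∫ x : Fin N → X, (∏ k, w p k (x k)) *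
          (dD f x * (starRingEnd ℂ) (dD f x)) ∂(Measure.pi fun _ : Fin N => μ)]
    rw [Finset.sum_congr rfl fun i _ => hdiag i,
      Finset.sum_congr (rfl : Finset.univ.offDiag = Finset.univ.offDiag)
        (fun p hp => hoff p (Finset.mem_offDiag.1 hp).2.2)]
    rw [hswapgen G2, hoffswap fun a b => G a a * G b b - G a b * G b a]
    rw [mul_add, ← mul_assoc, ← mul_assoc, inv_mul_cancel₀ hfact, one_mul, one_mul]
  -- right-hand side
  have gmc : Measurable fun y => ((g y : ℝ) : ℂ) := Complex.measurable_ofReal.comp hg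
  have gmc2 : Measurable fun y => ((g y : ℝ) : ℂ) * ((g y : ℝ) : ℂ) := gmc.mul gmc
  have hgg : ∀ y, ‖((g y : ℝ) : ℂ) * ((g y : ℝ) : ℂ)‖ ≤ Cm * Cm := by
    intro y
    rw [norm_mul]
    exact mul_le_mul (hgCm y) (hgCm y) (norm_nonneg _) (le_trans zero_le_one h1Cm)
  have hbase2 : ∀ j j', Integrable (fun y => f j y * (starRingEnd ℂ) (f j' y)) μ :=
    fun j j' => integrable_mul_conj μ (f j) (f j') (hmeas j') (hL2 j) (hL2 j')
  have hbase : ∀ j j', Integrable (fun y => (starRingEnd ℂ) (f j y) * f j' y) μ :=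
    fun j j' => (integrable_mul_conj μ (f j') (f j) (hmeas j) (hL2 j') (hL2 j)).congr
      (Filter.Eventually.of_forall fun y => mul_comm _ _)
  have horthc : ∀ j j', (∫ y, (starRingEnd ℂ) (f j y) * f j' y ∂μ)
      = if j = j' then 1 else 0 := by
    intro j j'
    have h1 : (fun y => (starRingEnd ℂ) (f j y) * f j' y)
        = fun y => (starRingEnd ℂ) (f j y * (starRingEnd ℂ) (f j' y)) := by
      funext y
      rw [map_mul, Complex.conj_conj, mul_comm]
    rw [h1, integral_conj, horth j j']
    split <;> simp
  have hGc : ∀ j j', (∫ y, ((g y : ℝ) : ℂ) * ((starRingEnd ℂ) (f j y) * f j' y) ∂μ)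
      = (starRingEnd ℂ) (G j j') := by
    intro j j'
    rw [hG, ← integral_conj]
    congr 1
    funext y
    simp only [map_mul, Complex.conj_conj, Complex.conj_ofReal]
  have hG2c : ∀ j j', (∫ y, (((g y : ℝ) : ℂ) * ((g y : ℝ) : ℂ)) *
        ((starRingEnd ℂ) (f j y) * f j' y) ∂μ)
      = (starRingEnd ℂ) (G2 j j') := by
    intro j j'
    rw [hG2, ← integral_conj]
    congr 1
    funext y
    simp only [map_mul, Complex.conj_conj, Complex.conj_ofReal]
  have hGconj : ∀ j j', (starRingEnd ℂ) (G j j') = G j' j := by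
    intro j j'
    rw [hG, ← integral_conj]
    congr 1
    funext y
    simp only [map_mul, Complex.conj_conj, Complex.conj_ofReal]
    ring
  have hG2conj : ∀ j j', (starRingEnd ℂ) (G2 j j') = G2 j' j := by
    intro j j'
    rw [hG2, ← integral_conj]
    congr 1
    funext y
    simp only [map_mul, Complex.conj_conj, Complex.conj_ofReal]
    ring
  have hRHS : ((∫ x, ∫ y, ‖K x y‖ ^ 2 * (g x - g y) ^ 2 ∂μ ∂μ : ℝ) : ℂ)
      = 2 * ∑ j, G2 j j - 2 * ∑ j, ∑ j', G j' j * G j j' := by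
    have hinner : ∀ x, ((∫ y, ‖K x y‖ ^ 2 * (g x - g y) ^ 2 ∂μ : ℝ) : ℂ)
        = ∑ j, ∑ j',
            ((if j = j' then (1 : ℂ) else 0) *
              ((((g x : ℝ) : ℂ) * ((g x : ℝ) : ℂ)) * (f j x * (starRingEnd ℂ) (f j' x)))
            - (2 * (starRingEnd ℂ) (G j j')) *
              (((g x : ℝ) : ℂ) * (f j x * (starRingEnd ℂ) (f j' x)))
            + (starRingEnd ℂ) (G2 j j') * (f j x * (starRingEnd ℂ) (f j' x))) := by
      intro x
      have hpt : ∀ y, ((‖K x y‖ ^ 2 * (g x - g y) ^ 2 : ℝ) : ℂ)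
          = ∑ j, ∑ j',
              ((((g x : ℝ) : ℂ) * ((g x : ℝ) : ℂ)) *
                  ((f j x * (starRingEnd ℂ) (f j' x)) * ((starRingEnd ℂ) (f j y) * f j' y))
              - (2 * ((g x : ℝ) : ℂ)) * ((f j x * (starRingEnd ℂ) (f j' x)) *
                  (((g y : ℝ) : ℂ) * ((starRingEnd ℂ) (f j y) * f j' y)))
              + (f j x * (starRingEnd ℂ) (f j' x)) *
                  ((((g y : ℝ) : ℂ) * ((g y : ℝ) : ℂ)) *
                    ((starRingEnd ℂ) (f j y) * f j' y))) := by
        intro y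
        rw [hK]
        push_cast
        rw [show (((‖∑ j, f j x * (starRingEnd ℂ) (f j y)‖ : ℝ) : ℂ)) ^ 2
            = (∑ j, f j x * (starRingEnd ℂ) (f j y)) *
              (starRingEnd ℂ) (∑ j, f j x * (starRingEnd ℂ) (f j y)) by
          rw [← Complex.ofReal_pow, Complex.sq_norm, Complex.mul_conj]]
        rw [map_sum, Finset.sum_mul_sum, Finset.sum_mul]
        refine Finset.sum_congr rfl fun j _ => ?_
        rw [Finset.sum_mul]
        refine Finset.sum_congr rfl fun j' _ => ?_
        simp only [map_mul, Complex.conj_conj]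
        ring
      refine Eq.trans (integral_ofReal (𝕜 := ℂ)
        (f := fun y => ‖K x y‖ ^ 2 * (g x - g y) ^ 2)).symm ?_
      refine (integral_congr_ae (Filter.Eventually.of_forall fun y => hpt y)).trans ?_
      have hint1 : ∀ j j' : Fin N, Integrable (fun y =>
          (((g x : ℝ) : ℂ) * ((g x : ℝ) : ℂ)) *
            ((f j x * (starRingEnd ℂ) (f j' x)) * ((starRingEnd ℂ) (f j y) * f j' y))) μ :=
        fun j j' => ((hbase j j').const_mul _).const_mul _
      have hint2 : ∀ j j' : Fin N, Integrable (fun y =>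
          (2 * ((g x : ℝ) : ℂ)) * ((f j x * (starRingEnd ℂ) (f j' x)) *
            (((g y : ℝ) : ℂ) * ((starRingEnd ℂ) (f j y) * f j' y)))) μ :=
        fun j j' => (((hbase j j').bdd_mul gmc.aestronglyMeasurable
          (ae_of_all _ fun y => hgCm y)).const_mul _).const_mul _
      have hint3 : ∀ j j' : Fin N, Integrable (fun y =>
          (f j x * (starRingEnd ℂ) (f j' x)) *
            ((((g y : ℝ) : ℂ) * ((g y : ℝ) : ℂ)) *
              ((starRingEnd ℂ) (f j y) * f j' y))) μ :=
        fun j j' => ((hbase j j').bdd_mul gmc2.aestronglyMeasurable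
          (ae_of_all _ fun y => hgg y)).const_mul _
      have hintsub : ∀ j j' : Fin N, Integrable (fun y =>
          (((g x : ℝ) : ℂ) * ((g x : ℝ) : ℂ)) *
            ((f j x * (starRingEnd ℂ) (f j' x)) * ((starRingEnd ℂ) (f j y) * f j' y))
          - (2 * ((g x : ℝ) : ℂ)) * ((f j x * (starRingEnd ℂ) (f j' x)) *
            (((g y : ℝ) : ℂ) * ((starRingEnd ℂ) (f j y) * f j' y)))) μ :=
        fun j j' => (hint1 j j').sub (hint2 j j')
      have hintc : ∀ j j' : Fin N, Integrable (fun y =>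
          (((g x : ℝ) : ℂ) * ((g x : ℝ) : ℂ)) *
            ((f j x * (starRingEnd ℂ) (f j' x)) * ((starRingEnd ℂ) (f j y) * f j' y))
          - (2 * ((g x : ℝ) : ℂ)) * ((f j x * (starRingEnd ℂ) (f j' x)) *
            (((g y : ℝ) : ℂ) * ((starRingEnd ℂ) (f j y) * f j' y)))
          + (f j x * (starRingEnd ℂ) (f j' x)) *
            ((((g y : ℝ) : ℂ) * ((g y : ℝ) : ℂ)) *
              ((starRingEnd ℂ) (f j y) * f j' y))) μ :=
        fun j j' => (hintsub j j').add (hint3 j j')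
      rw [integral_finset_sum _ fun j _ => integrable_finset_sum _ fun j' _ => hintc j j']
      refine Finset.sum_congr rfl fun j _ => ?_
      rw [integral_finset_sum _ fun j' _ => hintc j j']
      refine Finset.sum_congr rfl fun j' _ => ?_
      rw [integral_add (hintsub j j') (hint3 j j'),
        integral_sub (hint1 j j') (hint2 j j'),
        integral_const_mul, integral_const_mul, integral_const_mul, integral_const_mul,
        integral_const_mul, horthc j j', hGc j j', hG2c j j']
      ring
    refine Eq.trans (integral_ofReal (𝕜 := ℂ)
      (f := fun x => ∫ y, ‖K x y‖ ^ 2 * (g x - g y) ^ 2 ∂μ)).symm ?_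
    refine (integral_congr_ae (Filter.Eventually.of_forall fun x => hinner x)).trans ?_
    have hxint1 : ∀ j j' : Fin N, Integrable (fun x =>
        (if j = j' then (1 : ℂ) else 0) *
          ((((g x : ℝ) : ℂ) * ((g x : ℝ) : ℂ)) * (f j x * (starRingEnd ℂ) (f j' x)))) μ :=
      fun j j' => ((hbase2 j j').bdd_mul gmc2.aestronglyMeasurable
        (ae_of_all _ fun y => hgg y)).const_mul _
    have hxint2 : ∀ j j' : Fin N, Integrable (fun x =>
        (2 * (starRingEnd ℂ) (G j j')) *
          (((g x : ℝ) : ℂ) * (f j x * (starRingEnd ℂ) (f j' x)))) μ :=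
      fun j j' => ((hbase2 j j').bdd_mul gmc.aestronglyMeasurable
        (ae_of_all _ fun y => hgCm y)).const_mul _
    have hxint3 : ∀ j j' : Fin N, Integrable (fun x =>
        (starRingEnd ℂ) (G2 j j') * (f j x * (starRingEnd ℂ) (f j' x))) μ :=
      fun j j' => (hbase2 j j').const_mul _
    have hxintsub : ∀ j j' : Fin N, Integrable (fun x =>
        (if j = j' then (1 : ℂ) else 0) *
          ((((g x : ℝ) : ℂ) * ((g x : ℝ) : ℂ)) * (f j x * (starRingEnd ℂ) (f j' x)))
        - (2 * (starRingEnd ℂ) (G j j')) *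
          (((g x : ℝ) : ℂ) * (f j x * (starRingEnd ℂ) (f j' x)))) μ :=
      fun j j' => (hxint1 j j').sub (hxint2 j j')
    have hxintc : ∀ j j' : Fin N, Integrable (fun x =>
        (if j = j' then (1 : ℂ) else 0) *
          ((((g x : ℝ) : ℂ) * ((g x : ℝ) : ℂ)) * (f j x * (starRingEnd ℂ) (f j' x)))
        - (2 * (starRingEnd ℂ) (G j j')) *
          (((g x : ℝ) : ℂ) * (f j x * (starRingEnd ℂ) (f j' x)))
        + (starRingEnd ℂ) (G2 j j') * (f j x * (starRingEnd ℂ) (f j' x))) μ :=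
      fun j j' => (hxintsub j j').add (hxint3 j j')
    rw [integral_finset_sum _ fun j _ => integrable_finset_sum _ fun j' _ => hxintc j j']
    have hj : ∀ j : Fin N, ∑ j', (∫ x,
        ((if j = j' then (1 : ℂ) else 0) *
          ((((g x : ℝ) : ℂ) * ((g x : ℝ) : ℂ)) * (f j x * (starRingEnd ℂ) (f j' x)))
        - (2 * (starRingEnd ℂ) (G j j')) *
          (((g x : ℝ) : ℂ) * (f j x * (starRingEnd ℂ) (f j' x)))
        + (starRingEnd ℂ) (G2 j j') * (f j x * (starRingEnd ℂ) (f j' x))) ∂μ)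
        = G2 j j - 2 * ∑ j', G j' j * G j j' + G2 j j := by
      intro j
      have hval : ∀ j', (∫ x,
          ((if j = j' then (1 : ℂ) else 0) *
            ((((g x : ℝ) : ℂ) * ((g x : ℝ) : ℂ)) * (f j x * (starRingEnd ℂ) (f j' x)))
          - (2 * (starRingEnd ℂ) (G j j')) *
            (((g x : ℝ) : ℂ) * (f j x * (starRingEnd ℂ) (f j' x)))
          + (starRingEnd ℂ) (G2 j j') * (f j x * (starRingEnd ℂ) (f j' x))) ∂μ)
          = (if j = j' then (1 : ℂ) else 0) * G2 j j'
            - 2 * (G j' j * G j j')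
            + G2 j' j * (if j = j' then (1 : ℂ) else 0) := by
        intro j'
        rw [integral_add (hxintsub j j') (hxint3 j j'),
          integral_sub (hxint1 j j') (hxint2 j j'),
          integral_const_mul, integral_const_mul, integral_const_mul]
        have e2 : (∫ x, ((g x : ℝ) : ℂ) * ((g x : ℝ) : ℂ) *
            (f j x * (starRingEnd ℂ) (f j' x)) ∂μ) = G2 j j' := by rw [hG2]
        have e1 : (∫ x, ((g x : ℝ) : ℂ) *
            (f j x * (starRingEnd ℂ) (f j' x)) ∂μ) = G j j' := by rw [hG]
        rw [e2, e1, horth j j', hGconj, hG2conj]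
        ring
      rw [Finset.sum_congr rfl fun j' _ => hval j']
      rw [Finset.sum_add_distrib, Finset.sum_sub_distrib]
      congr 1
      · congr 1
        · simp [ite_mul, Finset.sum_ite_eq]
        · rw [← Finset.mul_sum]
      · simp [mul_ite, Finset.sum_ite_eq]
    rw [Finset.sum_congr rfl fun j (_ : j ∈ Finset.univ) =>
      integral_finset_sum Finset.univ fun j' _ => hxintc j j']
    rw [Finset.sum_congr rfl fun j _ => hj j]
    rw [Finset.sum_add_distrib, Finset.sum_sub_distrib, ← Finset.mul_sum]
    ring
  -- final algebra
  apply Complex.ofReal_injective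
  push_cast
  rw [hE2, hE1, hRHS]
  have hsq : (∑ j, G j j) ^ 2 = ∑ j, G j j * G j j
      + ∑ p ∈ Finset.univ.offDiag, G p.1 p.1 * G p.2 p.2 := by
    rw [sq, Finset.sum_mul_sum, ← Finset.sum_product',
      hsplit fun p => G p.1 p.1 * G p.2 p.2]
  have hdbl : ∑ j, ∑ j', G j' j * G j j' = ∑ j, G j j * G j j
      + ∑ p ∈ Finset.univ.offDiag, G p.1 p.2 * G p.2 p.1 := by
    rw [← Finset.sum_product' (f := fun j j' => G j' j * G j j'),
      hsplit fun p => G p.2 p.1 * G p.1 p.2]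
    congr 1
    exact Finset.sum_congr rfl fun p _ => mul_comm _ _
  rw [Finset.sum_sub_distrib, hsq, hdbl]
  ring


end DetVarAux

open DetVarAux in
/-- Variance of a linear statistic with respect to a determinantal point process:
`Var[∑ i, g (x i)] = (1/2) ∫∫ |K(x,y)|² (g(x) - g(y))² dμ(x) dμ(y)`. -/
theorem determinantal_variance_linear_statistic {X : Type*} [MeasurableSpace X]
    (μ : Measure X) (N : ℕ) (hN : 0 < N) (f : Fin N → X → ℂ)
    (hmeas : ∀ j, Measurable (f j))
    (hL2 : ∀ j, MemLp (f j) 2 μ)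
    (horth : ∀ i j, (∫ x, f i x * (starRingEnd ℂ) (f j x) ∂μ) =
      if i = j then 1 else 0)
    (K : X → X → ℂ)
    (hK : ∀ x y, K x y = ∑ j, f j x * (starRingEnd ℂ) (f j y))
    (ν : Measure (Fin N → X))
    (hν : ν = (Measure.pi fun _ : Fin N => μ).withDensity fun x =>
      ENNReal.ofReal ((Nat.factorial N : ℝ)⁻¹ *
        ‖(Matrix.of fun i j : Fin N => f j (x i)).det‖ ^ 2))
    (g : X → ℝ) (hg : Measurable g) (C : ℝ) (hgC : ∀ x, |g x| ≤ C) :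
    (∫ x : Fin N → X, (∑ i, g (x i)) ^ 2 ∂ν) -
        (∫ x : Fin N → X, (∑ i, g (x i)) ∂ν) ^ 2 =
      (1 / 2) * ∫ x, ∫ y, ‖K x y‖ ^ 2 * (g x - g y) ^ 2 ∂μ ∂μ := by
  classical
  set S : Set X := ⋃ j, {x | f j x ≠ 0} with hSdef
  have hSm : MeasurableSet S := by
    refine MeasurableSet.iUnion fun j => ?_
    exact (hmeas j (measurableSet_singleton 0)).compl
  have hS0 : ∀ x, x ∉ S → ∀ j, f j x = 0 := by
    intro x hx j
    by_contra h
    exact hx (Set.mem_iUnion.2 ⟨j, h⟩)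
  haveI hsf : SigmaFinite (μ.restrict S) := by
    set B : ℕ → Set X := fun n => ⋃ j, {x | ((n : ℝ≥0∞) + 1)⁻¹ ≤ (‖f j x‖₊ : ℝ≥0∞)} with hB
    refine Measure.sigmaFinite_of_countable
      (Set.countable_range fun n => B n ∪ Sᶜ) ?_ ?_
    · rintro s ⟨n, rfl⟩
      have h1 : μ.restrict S (B n ∪ Sᶜ) ≤ μ (B n) := by
        rw [Measure.restrict_apply' hSm]
        refine measure_mono ?_
        rintro x ⟨hx1 | hx2, hxS⟩
        · exact hx1
        · exact absurd hxS hx2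
      refine lt_of_le_of_lt h1 ?_
      refine lt_of_le_of_lt (measure_iUnion_le _) ?_
      rw [tsum_fintype]
      refine ENNReal.sum_lt_top.2 fun j _ => ?_
      have hcheb := meas_ge_le_mul_pow_eLpNorm_enorm μ (p := 2) two_ne_zero ENNReal.ofNat_ne_top
        (hL2 j).1 (ε := ((n : ℝ≥0∞) + 1)⁻¹)
        (by simp [ENNReal.inv_ne_zero]) (by simp)
      refine lt_of_le_of_lt hcheb ?_
      refine ENNReal.mul_lt_top ?_ ?_
      · refine ENNReal.rpow_lt_top_of_nonneg (by positivity) ?_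
        rw [inv_inv]
        exact (ENNReal.add_lt_top.2 ⟨ENNReal.natCast_lt_top n, ENNReal.one_lt_top⟩).ne
      · exact ENNReal.rpow_lt_top_of_nonneg (by positivity) (hL2 j).2.ne
    · rw [Set.sUnion_range]
      refine Set.eq_univ_of_forall fun x => ?_
      by_cases hx : x ∈ S
      · obtain ⟨j, hj⟩ : ∃ j, f j x ≠ 0 := by
          simpa [hSdef, Set.mem_iUnion] using hx
        have hne : (‖f j x‖₊ : ℝ≥0∞) ≠ 0 := by
          simp [hj]
        obtain ⟨n, hn⟩ := ENNReal.exists_inv_nat_lt hne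
        refine Set.mem_iUnion.2 ⟨n, Or.inl ?_⟩
        refine Set.mem_iUnion.2 ⟨j, ?_⟩
        have hle : ((n : ℝ≥0∞) + 1)⁻¹ ≤ ((n : ℝ≥0∞))⁻¹ := by
          gcongr
          exact le_self_add
        exact le_trans hle hn.le
      · exact Set.mem_iUnion.2 ⟨0, Or.inr hx⟩
  have hTm : MeasurableSet (Set.pi Set.univ fun _ : Fin N => S) :=
    MeasurableSet.pi Set.countable_univ fun _ _ => hSm
  -- orthonormality with respect to the restricted measure
  have horth' : ∀ i j, (∫ x, f i x * (starRingEnd ℂ) (f j x) ∂(μ.restrict S)) =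
      if i = j then 1 else 0 := by
    intro i j
    rw [setIntegral_eq_integral_of_forall_compl_eq_zero
      (fun x hx => by rw [hS0 x hx i, zero_mul]), horth i j]
  -- the density vanishes outside S^N
  have hν' : ν = (Measure.pi fun _ : Fin N => μ.restrict S).withDensity fun x =>
      ENNReal.ofReal ((Nat.factorial N : ℝ)⁻¹ *
        ‖(Matrix.of fun i j : Fin N => f j (x i)).det‖ ^ 2) := by
    have hind : (fun x : Fin N → X => ENNReal.ofReal ((Nat.factorial N : ℝ)⁻¹ *
        ‖(Matrix.of fun i j : Fin N => f j (x i)).det‖ ^ 2))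
        = (Set.pi Set.univ fun _ : Fin N => S).indicator
          (fun x => ENNReal.ofReal ((Nat.factorial N : ℝ)⁻¹ *
            ‖(Matrix.of fun i j : Fin N => f j (x i)).det‖ ^ 2)) := by
      funext x
      by_cases hx : x ∈ Set.pi Set.univ fun _ : Fin N => S
      · rw [Set.indicator_of_mem hx]
      · rw [Set.indicator_of_notMem hx]
        obtain ⟨i, _, hxi⟩ : ∃ i, i ∈ Set.univ ∧ x i ∉ S := by
          simpa [Set.mem_pi] using hx
        have hdet0 : (Matrix.of fun i j : Fin N => f j (x i)).det = 0 :=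
          Matrix.det_eq_zero_of_row_eq_zero i fun j => hS0 _ hxi j
        rw [hdet0]
        simp
    rw [hν, hind, withDensity_indicator hTm, pi_restrict_eq μ hSm hN,
      ← withDensity_indicator hTm, ← hind]
  -- apply the σ-finite case
  have main := core (μ.restrict S) N f hmeas (fun j => (hL2 j).restrict S) horth'
    K hK ν hν' g hg C hgC
  rw [main]
  congr 1
  -- transport the double integral back to μ
  have hinner_eq : ∀ x, (∫ y, ‖K x y‖ ^ 2 * (g x - g y) ^ 2 ∂(μ.restrict S))
      = ∫ y, ‖K x y‖ ^ 2 * (g x - g y) ^ 2 ∂μ := by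
    intro x
    refine setIntegral_eq_integral_of_forall_compl_eq_zero fun y hy => ?_
    have : K x y = 0 := by
      rw [hK]
      simp [hS0 y hy]
    rw [this]
    simp
  calc (∫ x, ∫ y, ‖K x y‖ ^ 2 * (g x - g y) ^ 2 ∂(μ.restrict S) ∂(μ.restrict S))
      = ∫ x, ∫ y, ‖K x y‖ ^ 2 * (g x - g y) ^ 2 ∂μ ∂(μ.restrict S) :=
        integral_congr_ae (Filter.Eventually.of_forall fun x => hinner_eq x)
    _ = ∫ x, ∫ y, ‖K x y‖ ^ 2 * (g x - g y) ^ 2 ∂μ ∂μ := by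
        refine setIntegral_eq_integral_of_forall_compl_eq_zero fun x hx => ?_
        have : ∀ y, ‖K x y‖ ^ 2 * (g x - g y) ^ 2 = 0 := by
          intro y
          have : K x y = 0 := by
            rw [hK]
            simp [hS0 x hx]
          rw [this]
          simp
        simp only [this, integral_zero]
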